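/- Let R be a commutative ring, let (E•, φ) and (F•, ψ) be two-term complexes of R-modules, and let f• = (f¹, f²) : (E•, φ) → (F•, ψ) be a 1-morphism. Then f• is an equivalence if and only if the sequence 0 → E¹ →u F¹ ⊕ E² →v F² → 0, where u(e) = (f¹(e), −φ(e)) and v(a, b) = ψ(a) + f²(b), is a split short exact sequence; explicitly, if and only if there exist R-linear maps γ : F¹ ⊕ E² → E¹ and δ : F² → F¹ ⊕ E² satisfying γ ∘ δ = 0, γ ∘ u = id_{E¹}, u ∘ γ + δ ∘ v = id_{F¹⊕E²}, and v ∘ δ = id_{F²}. -/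

import Mathlib

/-- The 1-morphism `(f1, f2) : (E•, φ) → (F•, ψ)` of two-term complexes of `R`-modules is an
equivalence in the 2-category of two-term complexes: there are a 1-morphism `(g1, g2)` in the
opposite direction and 2-morphisms (homotopies) `g• ∘ f• ⇒ id` and `f• ∘ g• ⇒ id`. -/
def IsComplexEquivMor {R : Type*} [CommRing R] {E1 E2 F1 F2 : Type*}
    [AddCommGroup E1] [Module R E1] [AddCommGroup E2] [Module R E2]
    [AddCommGroup F1] [Module R F1] [AddCommGroup F2] [Module R F2]
    (φ : E1 →ₗ[R] E2) (ψ : F1 →ₗ[R] F2)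
    (f1 : E1 →ₗ[R] F1) (f2 : E2 →ₗ[R] F2) : Prop :=
  ∃ (g1 : F1 →ₗ[R] E1) (g2 : F2 →ₗ[R] E2) (η : E2 →ₗ[R] E1) (ζ : F2 →ₗ[R] F1),
    φ ∘ₗ g1 = g2 ∘ₗ ψ ∧
    LinearMap.id = g1 ∘ₗ f1 + η ∘ₗ φ ∧ LinearMap.id = g2 ∘ₗ f2 + φ ∘ₗ η ∧
    LinearMap.id = f1 ∘ₗ g1 + ζ ∘ₗ ψ ∧ LinearMap.id = f2 ∘ₗ g2 + ψ ∘ₗ ζ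

/-- A 1-morphism `f• : (E•, φ) → (F•, ψ)` of two-term complexes of `R`-modules is an equivalence
if and only if `0 → E¹ → F¹ ⊕ E² → F² → 0`, with maps `u : e ↦ (f1 e, -φ e)` and
`v : (a, b) ↦ ψ a + f2 b`, is a split short exact sequence: there exist `γ : F¹ ⊕ E² → E¹` and
`δ : F² → F¹ ⊕ E²` with `γ ∘ δ = 0`, `γ ∘ u = id`, `u ∘ γ + δ ∘ v = id` and `v ∘ δ = id`. -/
theorem isComplexEquivMor_iff_split {R : Type*} [CommRing R] {E1 E2 F1 F2 : Type*}
    [AddCommGroup E1] [Module R E1] [AddCommGroup E2] [Module R E2]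
    [AddCommGroup F1] [Module R F1] [AddCommGroup F2] [Module R F2]
    (φ : E1 →ₗ[R] E2) (ψ : F1 →ₗ[R] F2)
    (f1 : E1 →ₗ[R] F1) (f2 : E2 →ₗ[R] F2)
    (hf : ψ ∘ₗ f1 = f2 ∘ₗ φ) :
    IsComplexEquivMor φ ψ f1 f2 ↔
      ∃ (γ : (F1 × E2) →ₗ[R] E1) (δ : F2 →ₗ[R] F1 × E2),
        γ ∘ₗ δ = 0 ∧
        γ ∘ₗ (f1.prod (-φ)) = LinearMap.id ∧
        (f1.prod (-φ)) ∘ₗ γ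
            + δ ∘ₗ (ψ ∘ₗ LinearMap.fst R F1 E2 + f2 ∘ₗ LinearMap.snd R F1 E2)
          = LinearMap.id ∧
        (ψ ∘ₗ LinearMap.fst R F1 E2 + f2 ∘ₗ LinearMap.snd R F1 E2) ∘ₗ δ = LinearMap.id := by
  unfold IsComplexEquivMor
  have pf : ∀ e : E1, ψ (f1 e) = f2 (φ e) := fun e => by
    simpa using LinearMap.congr_fun hf e
  constructor
  · rintro ⟨g1, g2, η, ζ, h1, h2, h3, h4, h5⟩
    have p1 : ∀ a : F1, φ (g1 a) = g2 (ψ a) := fun a => by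
      simpa using LinearMap.congr_fun h1 a
    have p2 : ∀ e : E1, e = g1 (f1 e) + η (φ e) := fun e => by
      simpa using LinearMap.congr_fun h2 e
    have p3 : ∀ b : E2, b = g2 (f2 b) + φ (η b) := fun b => by
      simpa using LinearMap.congr_fun h3 b
    have p4 : ∀ a : F1, a = f1 (g1 a) + ζ (ψ a) := fun a => by
      simpa using LinearMap.congr_fun h4 a
    have p5 : ∀ c : F2, c = f2 (g2 c) + ψ (ζ c) := fun c => by
      simpa using LinearMap.congr_fun h5 c
    set θ : E2 →ₗ[R] F1 := ζ ∘ₗ f2 - f1 ∘ₗ η with hθ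
    have pθ : ∀ b : E2, θ b = ζ (f2 b) - f1 (η b) := fun b => by simp [hθ]
    -- θ ∘ φ = 0
    have hθφ : ∀ e : E1, θ (φ e) = 0 := fun e => by
      have hx := p4 (f1 e)
      have hy : f1 e = f1 (g1 (f1 e)) + f1 (η (φ e)) := by
        have := congrArg f1 (p2 e); simpa [map_add] using this
      rw [pθ, ← pf]
      linear_combination (norm := abel) hy - hx
    -- ψ ∘ θ = 0
    have hψθ : ∀ b : E2, ψ (θ b) = 0 := fun b => by
      have hx := p5 (f2 b)
      have hy : f2 b = f2 (g2 (f2 b)) + f2 (φ (η b)) := by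
        have := congrArg f2 (p3 b); simpa [map_add] using this
      rw [pθ, map_sub, pf]
      linear_combination (norm := abel) hy - hx
    set γ : (F1 × E2) →ₗ[R] E1 := g1 ∘ₗ LinearMap.fst R F1 E2 - η ∘ₗ LinearMap.snd R F1 E2
      with hγ
    set δ : F2 →ₗ[R] F1 × E2 := (ζ - θ ∘ₗ g2).prod g2 with hδ
    have pγ : ∀ x : F1 × E2, γ x = g1 x.1 - η x.2 := fun x => by simp [hγ]
    have pδ : ∀ c : F2, δ c = (ζ c - θ (g2 c), g2 c) := fun c => by simp [hδ]
    have hA : γ ∘ₗ (f1.prod (-φ)) = LinearMap.id := by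
      refine LinearMap.ext fun e => ?_
      simp only [LinearMap.comp_apply, LinearMap.prod_apply, Function.prod, LinearMap.neg_apply,
        LinearMap.id_apply]
      rw [pγ]
      simp only [map_neg, sub_neg_eq_add]
      exact (p2 e).symm
    have hC : (ψ ∘ₗ LinearMap.fst R F1 E2 + f2 ∘ₗ LinearMap.snd R F1 E2) ∘ₗ δ
        = LinearMap.id := by
      refine LinearMap.ext fun c => ?_
      simp only [LinearMap.comp_apply, LinearMap.add_apply, LinearMap.fst_apply,
        LinearMap.snd_apply, LinearMap.id_apply]
      rw [pδ]
      simp only [map_sub, hψθ, sub_zero]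
      linear_combination (norm := abel) - p5 c
    have hB : (f1.prod (-φ)) ∘ₗ γ
        + δ ∘ₗ (ψ ∘ₗ LinearMap.fst R F1 E2 + f2 ∘ₗ LinearMap.snd R F1 E2)
        = LinearMap.id := by
      refine LinearMap.ext fun x => ?_
      obtain ⟨a, b⟩ := x
      have hq2 : θ (g2 (ψ a)) = 0 := by rw [← p1 a]; exact hθφ (g1 a)
      have hq3 : θ (g2 (f2 b)) = ζ (f2 b) - f1 (η b) := by
        have hg : g2 (f2 b) = b - φ (η b) := by
          linear_combination (norm := abel) - p3 b
        rw [hg, map_sub, hθφ (η b), sub_zero, pθ]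
      simp only [LinearMap.comp_apply, LinearMap.add_apply, LinearMap.prod_apply, Function.prod,
        LinearMap.fst_apply, LinearMap.snd_apply, LinearMap.id_apply, LinearMap.neg_apply]
      rw [pγ, pδ, Prod.mk_add_mk]
      refine Prod.ext ?_ ?_ <;> simp only [map_add, map_sub]
      · linear_combination (norm := abel) - p4 a - hq2 - hq3
      · linear_combination (norm := abel) - p1 a - p3 b
    refine ⟨γ, δ, ?_, hA, hB, hC⟩
    -- γ ∘ δ = 0 from the others
    refine LinearMap.ext fun c => ?_
    simp only [LinearMap.comp_apply, LinearMap.zero_apply]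
    have hBc := LinearMap.congr_fun hB (δ c)
    have hCc := LinearMap.congr_fun hC c
    simp only [LinearMap.comp_apply, LinearMap.add_apply, LinearMap.id_apply] at hBc hCc
    rw [hCc] at hBc
    have hu : (f1.prod (-φ)) (γ (δ c)) = 0 := add_eq_right.mp hBc
    have := LinearMap.congr_fun hA (γ (δ c))
    simp only [LinearMap.comp_apply, LinearMap.id_apply] at this
    rw [hu, map_zero] at this
    exact this.symm
  · rintro ⟨γ, δ, hD, hA, hB, hC⟩
    have pA : ∀ e : E1, γ (f1 e, -φ e) = e := fun e => by
      simpa using LinearMap.congr_fun hA e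
    have pC : ∀ c : F2, ψ (δ c).1 + f2 (δ c).2 = c := fun c => by
      simpa using LinearMap.congr_fun hC c
    have pB1 : ∀ x : F1 × E2, f1 (γ x) + (δ (ψ x.1 + f2 x.2)).1 = x.1 := fun x => by
      have := LinearMap.congr_fun hB x
      simp only [LinearMap.comp_apply, LinearMap.add_apply, LinearMap.prod_apply, Pi.prod,
        LinearMap.fst_apply, LinearMap.snd_apply, LinearMap.id_apply, LinearMap.neg_apply,
        Prod.mk.injEq, Prod.ext_iff, Prod.fst_add, Prod.snd_add] at this
      exact this.1
    have pB2 : ∀ x : F1 × E2, -φ (γ x) + (δ (ψ x.1 + f2 x.2)).2 = x.2 := fun x => by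
      have := LinearMap.congr_fun hB x
      simp only [LinearMap.comp_apply, LinearMap.add_apply, LinearMap.prod_apply, Pi.prod,
        LinearMap.fst_apply, LinearMap.snd_apply, LinearMap.id_apply, LinearMap.neg_apply,
        Prod.mk.injEq, Prod.ext_iff, Prod.fst_add, Prod.snd_add] at this
      exact this.2
    refine ⟨γ ∘ₗ LinearMap.inl R F1 E2, LinearMap.snd R F1 E2 ∘ₗ δ,
      -(γ ∘ₗ LinearMap.inr R F1 E2), LinearMap.fst R F1 E2 ∘ₗ δ, ?_, ?_, ?_, ?_, ?_⟩
    · refine LinearMap.ext fun a => ?_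
      have := pB2 (a, 0)
      simp only [map_zero, add_zero] at this
      simp only [LinearMap.comp_apply, LinearMap.inl_apply, LinearMap.snd_apply]
      linear_combination (norm := abel) - this
    · refine LinearMap.ext fun e => ?_
      have hAe := pA e
      have hsplit : ((f1 e, -φ e) : F1 × E2) = (f1 e, 0) - (0, φ e) := by
        simp [Prod.ext_iff]
      rw [hsplit, map_sub] at hAe
      simp only [LinearMap.comp_apply, LinearMap.add_apply, LinearMap.inl_apply,
        LinearMap.inr_apply, LinearMap.neg_apply, LinearMap.id_apply]
      linear_combination (norm := abel) - hAe
    · refine LinearMap.ext fun b => ?_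
      have := pB2 (0, b)
      simp only [map_zero, zero_add] at this
      simp only [LinearMap.comp_apply, LinearMap.add_apply, LinearMap.inr_apply,
        LinearMap.neg_apply, LinearMap.snd_apply, LinearMap.id_apply, map_neg]
      linear_combination (norm := abel) - this
    · refine LinearMap.ext fun a => ?_
      have := pB1 (a, 0)
      simp only [map_zero, add_zero] at this
      simp only [LinearMap.comp_apply, LinearMap.add_apply, LinearMap.inl_apply,
        LinearMap.fst_apply, LinearMap.id_apply]
      linear_combination (norm := abel) - this
    · refine LinearMap.ext fun c => ?_
      have := pC c
      simp only [LinearMap.comp_apply, LinearMap.add_apply, LinearMap.fst_apply,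
        LinearMap.snd_apply, LinearMap.id_apply]
      linear_combination (norm := abel) - this
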